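/- Let v1=(x1,y1) and v2=(x2,y2) be points in the open first quadrant with x1<y1, x2<y2, x1<x2, all of x1,x2,y1,y2 distinct. Then the intervals [x1,y1] and [x2,y2] are disjoint if and only if R(v1,v2) ∩ R(v1*,v2*) ≠ ∅, where v*=(y,x) denotes reflection in the line x=y. -/
import Mathlib


/-- The closed axis-parallel rectangle with diagonal vertices `v` and `w`. -/
def rect (v w : ℝ × ℝ) : Set (ℝ × ℝ) :=
  Set.Icc (min v.1 w.1) (max v.1 w.1) ×ˢ Set.Icc (min v.2 w.2) (max v.2 w.2)

theorem stmt1 (x1 y1 x2 y2 : ℝ)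
    (h1 : 0 < x1) (h1' : x1 < y1) (h2 : 0 < x2) (h2' : x2 < y2) (h12 : x1 < x2)
    (hdist : List.Pairwise (· ≠ ·) [x1, x2, y1, y2]) :
    Set.Icc x1 y1 ∩ Set.Icc x2 y2 = ∅ ↔
      (rect (x1, y1) (x2, y2) ∩ rect (y1, x1) (y2, x2)).Nonempty := by
  simp only [List.pairwise_cons, List.mem_cons, List.mem_singleton] at hdist
  have hy1x2 : y1 ≠ x2 := fun h => hdist.2.1 y1 (Or.inl rfl) h.symm
  constructor
  · intro hemp
    have hlt : y1 < x2 := by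
      rcases lt_or_ge y1 x2 with h | h
      · exact h
      · exfalso
        have : x2 ∈ Set.Icc x1 y1 ∩ Set.Icc x2 y2 :=
          ⟨⟨h12.le, h⟩, le_refl _, h2'.le⟩
        rw [hemp] at this; exact this
    refine ⟨(x2, x2), ?_, ?_⟩ <;>
      simp only [rect, Set.mem_prod, Set.mem_Icc] <;>
      constructor <;> constructor <;>
      simp [le_min_iff, min_le_iff, le_max_iff] <;>
      first
        | exact Or.inl h12.le
        | exact Or.inr le_rfl
        | exact Or.inl hlt.le
        | exact Or.inr h2'.le
  · rintro ⟨⟨a, b⟩, hp1, hp2⟩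
    simp only [rect, Set.mem_prod, Set.mem_Icc] at hp1 hp2
    have ha2 : a ≤ max x1 x2 := hp1.1.2
    have ha2' : a ≤ x2 := by simpa [max_eq_right h12.le] using ha2
    have hma : min y1 y2 ≤ a := hp2.1.1
    have hy1le : y1 ≤ x2 := by
      rcases le_total y1 y2 with h | h
      · have := (min_eq_left h) ▸ hma; linarith
      · have := (min_eq_right h) ▸ hma; linarith
    have hlt : y1 < x2 := lt_of_le_of_ne hy1le hy1x2
    ext t
    simp only [Set.mem_inter_iff, Set.mem_Icc, Set.mem_empty_iff_false, iff_false]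
    rintro ⟨⟨_, ht1⟩, ht2, _⟩
    linarith
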